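/- Let 1 ≤ p < ∞ and define q : [0,∞) → ℝ by q(t) := Σ_{n=0}^∞ χ_{[n², n²+1]}(t), where χ_A denotes the characteristic function of the set A. Then: (i) ∫_0^t |q(s)|^p ds ≤ 2 + √t for every t ≥ 0; (ii) q is equi-Weyl-p-vanishing; and (iii) q is not Stepanov p-vanishing. -/

import Mathlib

open MeasureTheory Filter Set
open scoped ENNReal NNReal Topology

noncomputable section

/-- Local `p`-integrability of `f` on the set `I`. -/
def LocLpOn {X : Type*} [NormedAddCommGroup X] (p : ℝ) (I : Set ℝ) (f : ℝ → X) : Prop :=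
  AEStronglyMeasurable f (volume.restrict I) ∧
    MeasureTheory.LocallyIntegrableOn (fun t => ‖f t‖ ^ p) I volume

/-- The Stepanov `p`-norm of `f` over the set `I`, as an extended nonnegative real. -/
def SpNorm {X : Type*} [NormedAddCommGroup X] (p : ℝ) (I : Set ℝ) (f : ℝ → X) : ℝ≥0∞ :=
  ⨆ t ∈ I, ENNReal.ofReal ((∫ s in t..t + 1, ‖f s‖ ^ p) ^ (1 / p))

/-- The Stepanov distance `D_{S_l}^p[f,g]` over the set `I`, as an extended
nonnegative real. -/
def DS {X : Type*} [NormedAddCommGroup X] (p l : ℝ) (I : Set ℝ) (f g : ℝ → X) : ℝ≥0∞ :=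
  ⨆ x ∈ I, ENNReal.ofReal (((1 / l) * ∫ t in x..x + l, ‖f t - g t‖ ^ p) ^ (1 / p))

/-- `f` is equi-Weyl-`p`-almost periodic on `I`. -/
def EquiWeylAP {X : Type*} [NormedAddCommGroup X] (p : ℝ) (I : Set ℝ) (f : ℝ → X) : Prop :=
  ∀ ε : ℝ, 0 < ε → ∃ l : ℝ, 0 < l ∧ ∃ L : ℝ, 0 < L ∧
    ∀ a : ℝ, Set.Icc a (a + L) ⊆ I →
      ∃ τ ∈ Set.Icc a (a + L), DS p l I (fun t => f (t + τ)) f ≤ ENNReal.ofReal ε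

/-- `f` is Weyl-`p`-almost periodic on `I`. -/
def WeylAP {X : Type*} [NormedAddCommGroup X] (p : ℝ) (I : Set ℝ) (f : ℝ → X) : Prop :=
  ∀ ε : ℝ, 0 < ε → ∃ L : ℝ, 0 < L ∧
    ∀ a : ℝ, Set.Icc a (a + L) ⊆ I →
      ∃ τ ∈ Set.Icc a (a + L),
        Filter.limsup (fun l => DS p l I (fun t => f (t + τ)) f) Filter.atTop ≤
          ENNReal.ofReal ε

/-- `f` is Stepanov `p`-almost periodic on `I`. -/
def StepanovAP {X : Type*} [NormedAddCommGroup X] (p : ℝ) (I : Set ℝ) (f : ℝ → X) : Prop :=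
  ∀ ε : ℝ, 0 < ε → ∃ L : ℝ, 0 < L ∧
    ∀ a : ℝ, Set.Icc a (a + L) ⊆ I →
      ∃ τ ∈ Set.Icc a (a + L),
        ∀ t ∈ I, (∫ s in t..t + 1, ‖f (s + τ) - f s‖ ^ p) ^ (1 / p) ≤ ε

/-- `v` belongs to `C_0([0,∞) : Y)`: continuous on `[0,∞)` and vanishing at `+∞`. -/
def CZero {Y : Type*} [NormedAddCommGroup Y] (v : ℝ → Y) : Prop :=
  ContinuousOn v (Set.Ici (0 : ℝ)) ∧
    Filter.Tendsto (fun t => ‖v t‖) Filter.atTop (nhds 0)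

/-- `f` is Stepanov `p`-vanishing (as a function on `[0,∞)`). -/
def SpVanishing {Y : Type*} [NormedAddCommGroup Y] (p : ℝ) (f : ℝ → Y) : Prop :=
  SpNorm p (Set.Ici 0) f < ⊤ ∧
    Filter.Tendsto (fun t => ∫ s in t..t + 1, ‖f s‖ ^ p) Filter.atTop (nhds 0)

/-- `f` is equi-Weyl-`p`-vanishing (as a function on `[0,∞)`):
`lim_{l→∞} limsup_{t→∞} sup_{x≥0} ((1/l)∫_x^{x+l} ‖f(t+s)‖^p ds)^{1/p} = 0`. -/
def EquiWeylVanishing {Y : Type*} [NormedAddCommGroup Y] (p : ℝ) (f : ℝ → Y) : Prop :=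
  Filter.Tendsto (fun l : ℝ =>
      Filter.limsup (fun t : ℝ =>
          ⨆ x ∈ Set.Ici (0 : ℝ),
            ENNReal.ofReal (((1 / l) * ∫ s in x..x + l, ‖f (t + s)‖ ^ p) ^ (1 / p)))
        Filter.atTop)
    Filter.atTop (nhds 0)

/-- `f` is Weyl-`p`-vanishing (as a function on `[0,∞)`):
`lim_{t→∞} limsup_{l→∞} sup_{x≥0} ((1/l)∫_x^{x+l} ‖f(t+s)‖^p ds)^{1/p} = 0`. -/
def WeylVanishing {Y : Type*} [NormedAddCommGroup Y] (p : ℝ) (f : ℝ → Y) : Prop :=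
  Filter.Tendsto (fun t : ℝ =>
      Filter.limsup (fun l : ℝ =>
          ⨆ x ∈ Set.Ici (0 : ℝ),
            ENNReal.ofReal (((1 / l) * ∫ s in x..x + l, ‖f (t + s)‖ ^ p) ^ (1 / p)))
        Filter.atTop)
    Filter.atTop (nhds 0)

namespace Rem26

def S : Set ℝ := ⋃ n : ℕ, Set.Icc ((n : ℝ) ^ 2) ((n : ℝ) ^ 2 + 1)

lemma measurableSet_S : MeasurableSet S :=
  MeasurableSet.iUnion fun _ => measurableSet_Icc

lemma sq_gap {m n : ℕ} (h : m < n) : (m : ℝ) ^ 2 + 1 ≤ (n : ℝ) ^ 2 := by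
  have h1 : (m : ℝ) + 1 ≤ (n : ℝ) := by exact_mod_cast h
  have h0 : (0 : ℝ) ≤ m := Nat.cast_nonneg m
  nlinarith

def E : Set ℝ := ⋃ n : ℕ, ({((n : ℝ) ^ 2)} ∪ {((n : ℝ) ^ 2 + 1)})

lemma E_null : volume E = 0 :=
  measure_iUnion_null fun _ =>
    measure_union_null (measure_singleton _) (measure_singleton _)

lemma q_pow_eq (p : ℝ) (hp : p ≠ 0) (q : ℝ → ℝ)
    (hq : ∀ t : ℝ, q t =
      ∑' n : ℕ, Set.indicator (Set.Icc ((n : ℝ) ^ 2) ((n : ℝ) ^ 2 + 1)) (fun _ => (1 : ℝ)) t)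
    {s : ℝ} (hs : s ∉ E) :
    ‖q s‖ ^ p = S.indicator (fun _ => (1 : ℝ)) s := by
  have hsE : ∀ n : ℕ, s ≠ (n : ℝ) ^ 2 ∧ s ≠ (n : ℝ) ^ 2 + 1 := by
    intro n
    constructor <;> intro h <;> exact hs (Set.mem_iUnion.2 ⟨n, by simp [h]⟩)
  by_cases hmem : s ∈ S
  · obtain ⟨m, hm⟩ : ∃ m : ℕ, s ∈ Set.Icc ((m : ℝ) ^ 2) ((m : ℝ) ^ 2 + 1) := by
      simpa [S] using hmem
    have hlt1 : (m : ℝ) ^ 2 < s := lt_of_le_of_ne hm.1 (Ne.symm (hsE m).1)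
    have hlt2 : s < (m : ℝ) ^ 2 + 1 := lt_of_le_of_ne hm.2 (hsE m).2
    have hq1 : q s = 1 := by
      rw [hq s, tsum_eq_single m ?_]
      · simp [Set.indicator_of_mem hm]
      · intro n hn
        apply Set.indicator_of_notMem
        intro hcon
        rcases lt_or_gt_of_ne hn with h | h
        · have := sq_gap h
          have := hcon.2
          linarith
        · have := sq_gap h
          have := hcon.1
          linarith
    rw [hq1, Set.indicator_of_mem hmem]
    simp
  · have hq0 : q s = 0 := by
      rw [hq s]
      have : ∀ n : ℕ,
          Set.indicator (Set.Icc ((n : ℝ) ^ 2) ((n : ℝ) ^ 2 + 1)) (fun _ => (1 : ℝ)) s = 0 := by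
        intro n
        apply Set.indicator_of_notMem
        exact fun h => hmem (Set.mem_iUnion.2 ⟨n, h⟩)
      simp [this]
    rw [hq0, Set.indicator_of_notMem hmem]
    simp [Real.zero_rpow hp]

lemma q_pow_ae (p : ℝ) (hp : p ≠ 0) (q : ℝ → ℝ)
    (hq : ∀ t : ℝ, q t =
      ∑' n : ℕ, Set.indicator (Set.Icc ((n : ℝ) ^ 2) ((n : ℝ) ^ 2 + 1)) (fun _ => (1 : ℝ)) t) :
    (fun s => ‖q s‖ ^ p) =ᵐ[volume] S.indicator (fun _ => (1 : ℝ)) := by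
  have hsub : {s : ℝ | ¬ (‖q s‖ ^ p = S.indicator (fun _ => (1 : ℝ)) s)} ⊆ E := by
    intro s hs
    by_contra h
    exact hs (q_pow_eq p hp q hq h)
  exact MeasureTheory.ae_iff.2 (measure_mono_null hsub E_null)

lemma integral_q (p : ℝ) (hp : p ≠ 0) (q : ℝ → ℝ)
    (hq : ∀ t : ℝ, q t =
      ∑' n : ℕ, Set.indicator (Set.Icc ((n : ℝ) ^ 2) ((n : ℝ) ^ 2 + 1)) (fun _ => (1 : ℝ)) t)
    {a b : ℝ} (hab : a ≤ b) :
    (∫ s in a..b, ‖q s‖ ^ p) = (volume (S ∩ Set.Ioc a b)).toReal := by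
  rw [intervalIntegral.integral_of_le hab,
    integral_congr_ae (ae_restrict_of_ae (q_pow_ae p hp q hq)),
    MeasureTheory.integral_indicator_const (1 : ℝ) measurableSet_S,
    measureReal_def, Measure.restrict_apply measurableSet_S]
  simp

lemma measure_bound {a b : ℝ} (hab : a ≤ b) :
    volume (S ∩ Set.Ioc a b) ≤
      ENNReal.ofReal (Real.sqrt (max b 0) - Real.sqrt (max (a - 1) 0) + 1) := by
  set c := Real.sqrt (max (a - 1) 0) with hcdef
  set d := Real.sqrt (max b 0) with hddef
  have hc0 : 0 ≤ c := Real.sqrt_nonneg _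
  have hd0 : 0 ≤ d := Real.sqrt_nonneg _
  have hcd : c ≤ d := Real.sqrt_le_sqrt (max_le_max (by linarith) le_rfl)
  set m := ⌈c⌉₊ with hmdef
  set M := ⌊d⌋₊ with hMdef
  have key : ∀ n : ℕ, n ∉ Finset.Icc m M →
      volume (Set.Icc ((n : ℝ) ^ 2) ((n : ℝ) ^ 2 + 1) ∩ Set.Ioc a b) = 0 := by
    intro n hn
    rw [Finset.mem_Icc, not_and_or, not_le, not_le] at hn
    have hempty : Set.Icc ((n : ℝ) ^ 2) ((n : ℝ) ^ 2 + 1) ∩ Set.Ioc a b = ∅ := by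
      rcases hn with h | h
      · have h1 : (n : ℝ) < c := Nat.lt_ceil.1 h
        have hc2 : c ^ 2 = max (a - 1) 0 := Real.sq_sqrt (le_max_right _ _)
        have h2 : (n : ℝ) ^ 2 < max (a - 1) 0 := by
          nlinarith [Nat.cast_nonneg (α := ℝ) n]
        have h3 : (n : ℝ) ^ 2 < a - 1 := by
          rcases lt_max_iff.1 h2 with h' | h'
          · exact h'
          · exact absurd h' (not_lt.2 (by positivity))
        apply Set.eq_empty_iff_forall_notMem.2
        rintro s ⟨⟨_, hs2⟩, hs3, _⟩
        linarith
      · have h1 : d < (n : ℝ) := (Nat.floor_lt hd0).1 h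
        have hd2 : d ^ 2 = max b 0 := Real.sq_sqrt (le_max_right _ _)
        have h2 : b < (n : ℝ) ^ 2 := by
          have : max b 0 < (n : ℝ) ^ 2 := by nlinarith
          exact lt_of_le_of_lt (le_max_left _ _) this
        apply Set.eq_empty_iff_forall_notMem.2
        rintro s ⟨⟨hs1, _⟩, _, hs4⟩
        linarith
    rw [hempty]; simp
  calc volume (S ∩ Set.Ioc a b)
      ≤ ∑' n : ℕ, volume (Set.Icc ((n : ℝ) ^ 2) ((n : ℝ) ^ 2 + 1) ∩ Set.Ioc a b) := by
        rw [S, Set.iUnion_inter]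
        exact measure_iUnion_le _
    _ = ∑ n ∈ Finset.Icc m M,
          volume (Set.Icc ((n : ℝ) ^ 2) ((n : ℝ) ^ 2 + 1) ∩ Set.Ioc a b) := tsum_eq_sum key
    _ ≤ (Finset.Icc m M).card • (1 : ℝ≥0∞) := by
        apply Finset.sum_le_card_nsmul
        intro n _
        calc volume (Set.Icc ((n : ℝ) ^ 2) ((n : ℝ) ^ 2 + 1) ∩ Set.Ioc a b)
            ≤ volume (Set.Icc ((n : ℝ) ^ 2) ((n : ℝ) ^ 2 + 1)) :=
              measure_mono Set.inter_subset_left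
          _ = 1 := by rw [Real.volume_Icc]; simp
    _ ≤ ENNReal.ofReal (d - c + 1) := by
        rw [nsmul_eq_mul, mul_one]
        have hcard : ((Finset.Icc m M).card : ℝ) ≤ d - c + 1 := by
          rw [Nat.card_Icc]
          by_cases hmM : m ≤ M + 1
          · rw [Nat.cast_sub hmM]
            push_cast
            have h1 : (M : ℝ) ≤ d := Nat.floor_le hd0
            have h2 : c ≤ (m : ℝ) := Nat.le_ceil c
            linarith
          · rw [Nat.sub_eq_zero_of_le (by omega)]
            simp
            linarith
        calc ((Finset.Icc m M).card : ℝ≥0∞)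
            = ENNReal.ofReal ((Finset.Icc m M).card : ℝ) := by
              rw [ENNReal.ofReal_natCast]
          _ ≤ _ := ENNReal.ofReal_le_ofReal hcard



lemma sqrt_add_le (x y : ℝ) (hx : 0 ≤ x) (hy : 0 ≤ y) :
    Real.sqrt (x + y) ≤ Real.sqrt x + Real.sqrt y := by
  have h1 := Real.sq_sqrt hx
  have h2 := Real.sq_sqrt hy
  have h3 := Real.sqrt_nonneg x
  have h4 := Real.sqrt_nonneg y
  have h5 : Real.sqrt (x + y) ≤ Real.sqrt ((Real.sqrt x + Real.sqrt y) ^ 2) := by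
    apply Real.sqrt_le_sqrt
    nlinarith
  calc Real.sqrt (x + y) ≤ Real.sqrt ((Real.sqrt x + Real.sqrt y) ^ 2) := h5
    _ = Real.sqrt x + Real.sqrt y := Real.sqrt_sq (by positivity)

lemma integral_bound (p : ℝ) (hp : p ≠ 0) (q : ℝ → ℝ)
    (hq : ∀ t : ℝ, q t =
      ∑' n : ℕ, Set.indicator (Set.Icc ((n : ℝ) ^ 2) ((n : ℝ) ^ 2 + 1)) (fun _ => (1 : ℝ)) t)
    {a l : ℝ} (hl : 1 ≤ l) :
    (∫ s in a..a + l, ‖q s‖ ^ p) ≤ (Real.sqrt 2 + 1) * Real.sqrt l := by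
  have hl0 : (0 : ℝ) ≤ l := by linarith
  rw [integral_q p hp q hq (by linarith : a ≤ a + l)]
  have h1 := measure_bound (a := a) (b := a + l) (by linarith)
  set c := Real.sqrt (max (a - 1) 0) with hcdef
  set d := Real.sqrt (max (a + l) 0) with hddef
  have hbd : d - c + 1 ≤ (Real.sqrt 2 + 1) * Real.sqrt l := by
    have hmax : max (a + l) 0 ≤ max (a - 1) 0 + (l + 1) := by
      apply max_le
      · calc a + l = (a - 1) + (l + 1) := by ring
          _ ≤ max (a - 1) 0 + (l + 1) := by gcongr; exact le_max_left _ _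
      · positivity
    have h2 : d ≤ c + Real.sqrt (l + 1) :=
      (Real.sqrt_le_sqrt hmax).trans (sqrt_add_le _ _ (le_max_right _ _) (by linarith))
    have h3 : Real.sqrt (l + 1) ≤ Real.sqrt 2 * Real.sqrt l := by
      rw [← Real.sqrt_mul (by norm_num) l]
      exact Real.sqrt_le_sqrt (by linarith)
    have h4 : (1 : ℝ) ≤ Real.sqrt l := by
      rw [show (1 : ℝ) = Real.sqrt 1 by simp]
      exact Real.sqrt_le_sqrt hl
    linarith
  calc (volume (S ∩ Set.Ioc a (a + l))).toReal
      ≤ (ENNReal.ofReal (d - c + 1)).toReal :=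
        ENNReal.toReal_mono ENNReal.ofReal_ne_top h1
    _ ≤ (Real.sqrt 2 + 1) * Real.sqrt l := by
        rw [ENNReal.toReal_ofReal']
        exact max_le hbd (by positivity)

lemma sqrt_tendsto : Filter.Tendsto Real.sqrt Filter.atTop Filter.atTop := by
  apply Filter.tendsto_atTop_atTop.2
  intro b
  refine ⟨(max b 0) ^ 2, fun x hx => ?_⟩
  calc b ≤ max b 0 := le_max_left _ _
    _ = Real.sqrt ((max b 0) ^ 2) := (Real.sqrt_sq (le_max_right _ _)).symm
    _ ≤ Real.sqrt x := Real.sqrt_le_sqrt hx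

end Rem26

/-- Remark 2.6: the function `q(t) = Σ_n χ_{[n²,n²+1]}(t)` satisfies
`∫_0^t q^p ≤ 2 + √t`, is equi-Weyl-`p`-vanishing, but is not Stepanov
`p`-vanishing. -/
theorem example_equiWeylVanishing_not_spVanishing (p : ℝ) (hp : 1 ≤ p)
    (q : ℝ → ℝ)
    (hq : ∀ t : ℝ, q t =
      ∑' n : ℕ, Set.indicator (Set.Icc ((n : ℝ) ^ 2) ((n : ℝ) ^ 2 + 1)) (fun _ => (1 : ℝ)) t) :
    (∀ t : ℝ, 0 ≤ t → (∫ s in (0 : ℝ)..t, |q s| ^ p) ≤ 2 + Real.sqrt t) ∧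
      EquiWeylVanishing p q ∧ ¬ SpVanishing p q := by

  have hp0 : (0:ℝ) < p := lt_of_lt_of_le one_pos hp
  have hpne : p ≠ 0 := hp0.ne'
  have hqn : ∀ s : ℝ, ‖q s‖ = |q s| := fun s => Real.norm_eq_abs _
  refine ⟨?_, ?_, ?_⟩
  · -- part (i)
    intro t ht
    have heq : (∫ s in (0:ℝ)..t, |q s| ^ p) = ∫ s in (0:ℝ)..t, ‖q s‖ ^ p := by
      simp [hqn]
    rw [heq, Rem26.integral_q p hpne q hq ht]
    have hb := Rem26.measure_bound (a := (0:ℝ)) (b := t) ht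
    have hsimp : Real.sqrt (max t 0) - Real.sqrt (max ((0:ℝ) - 1) 0) + 1
        = Real.sqrt t + 1 := by
      rw [max_eq_left ht]
      norm_num
    rw [hsimp] at hb
    calc (volume (Rem26.S ∩ Set.Ioc 0 t)).toReal
        ≤ (ENNReal.ofReal (Real.sqrt t + 1)).toReal :=
          ENNReal.toReal_mono ENNReal.ofReal_ne_top hb
      _ = Real.sqrt t + 1 := ENNReal.toReal_ofReal (by positivity)
      _ ≤ 2 + Real.sqrt t := by linarith
  · -- part (ii)
    unfold EquiWeylVanishing
    have hbound : ∀ l : ℝ, 1 ≤ l →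
        (Filter.limsup (fun t : ℝ =>
            ⨆ x ∈ Set.Ici (0 : ℝ),
              ENNReal.ofReal (((1 / l) * ∫ s in x..x + l, ‖q (t + s)‖ ^ p) ^ (1 / p)))
          Filter.atTop) ≤
        ENNReal.ofReal (((Real.sqrt 2 + 1) / Real.sqrt l) ^ (1 / p)) := by
      intro l hl
      have hl0 : (0:ℝ) < l := by linarith
      have hsl : (0:ℝ) < Real.sqrt l := Real.sqrt_pos.2 hl0
      refine Filter.limsup_le_of_le (by isBoundedDefault)
        (Filter.Eventually.of_forall fun t => ?_)
      refine iSup₂_le fun x hx => ?_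
      apply ENNReal.ofReal_le_ofReal
      have hintnn : (0:ℝ) ≤ ∫ s in x..x + l, ‖q (t + s)‖ ^ p := by
        apply intervalIntegral.integral_nonneg (by linarith)
        intro u _
        exact Real.rpow_nonneg (norm_nonneg _) p
      apply Real.rpow_le_rpow (by positivity) ?_ (by positivity)
      have hint : (∫ s in x..x + l, ‖q (t + s)‖ ^ p)
          = ∫ u in (t + x)..(t + x) + l, ‖q u‖ ^ p := by
        have := intervalIntegral.integral_comp_add_left (a := x) (b := x + l)
          (fun u => ‖q u‖ ^ p) t
        rw [this]
        ring_nf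
      have hle : (∫ s in x..x + l, ‖q (t + s)‖ ^ p) ≤ (Real.sqrt 2 + 1) * Real.sqrt l := by
        rw [hint]
        exact Rem26.integral_bound p hpne q hq hl
      have heq : (1 / l) * ((Real.sqrt 2 + 1) * Real.sqrt l)
          = (Real.sqrt 2 + 1) / Real.sqrt l := by
        have hls : Real.sqrt l * Real.sqrt l = l := Real.mul_self_sqrt hl0.le
        field_simp
        linear_combination hls
      calc (1 / l) * ∫ s in x..x + l, ‖q (t + s)‖ ^ p
          ≤ (1 / l) * ((Real.sqrt 2 + 1) * Real.sqrt l) := by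
            apply mul_le_mul_of_nonneg_left hle (by positivity)
        _ = (Real.sqrt 2 + 1) / Real.sqrt l := heq
    have hB : Filter.Tendsto
        (fun l : ℝ => ENNReal.ofReal (((Real.sqrt 2 + 1) / Real.sqrt l) ^ (1 / p)))
        Filter.atTop (nhds 0) := by
      have h1 : Filter.Tendsto (fun l : ℝ => (Real.sqrt 2 + 1) / Real.sqrt l)
          Filter.atTop (nhds 0) :=
        Filter.Tendsto.div_atTop tendsto_const_nhds Rem26.sqrt_tendsto
      have hc : ContinuousAt (fun x : ℝ => x ^ (1 / p)) 0 :=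
        Real.continuousAt_rpow_const 0 (1 / p) (Or.inr (by positivity))
      have h2 : Filter.Tendsto (fun l : ℝ => ((Real.sqrt 2 + 1) / Real.sqrt l) ^ (1 / p))
          Filter.atTop (nhds 0) := by
        have := hc.tendsto.comp h1
        simpa [Function.comp_def, one_div, Real.zero_rpow (show p⁻¹ ≠ 0 by positivity)] using this
      have := ENNReal.tendsto_ofReal h2
      simpa using this
    refine tendsto_of_tendsto_of_tendsto_of_le_of_le' tendsto_const_nhds hB
      (Filter.Eventually.of_forall fun l => zero_le) ?_
    exact Filter.eventually_atTop.2 ⟨1, hbound⟩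
  · -- part (iii)
    rintro ⟨-, h2⟩
    have hc : Filter.Tendsto (fun n : ℕ => ((n : ℝ) ^ 2)) Filter.atTop Filter.atTop :=
      (tendsto_pow_atTop two_ne_zero).comp tendsto_natCast_atTop_atTop
    have h3 := h2.comp hc
    have h4 : ((fun t => ∫ s in t..t + 1, ‖q s‖ ^ p) ∘ fun n : ℕ => ((n : ℝ) ^ 2))
        = fun _ : ℕ => (1 : ℝ) := by
      funext n
      show (∫ s in ((n:ℝ)^2)..((n:ℝ)^2) + 1, ‖q s‖ ^ p) = 1
      rw [Rem26.integral_q p hpne q hq (by linarith)]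
      have hsub : Set.Ioc ((n:ℝ)^2) ((n:ℝ)^2 + 1) ⊆ Rem26.S := fun s hs =>
        Set.mem_iUnion.2 ⟨n, Set.Ioc_subset_Icc_self hs⟩
      rw [Set.inter_eq_self_of_subset_right hsub, Real.volume_Ioc]
      simp
    rw [h4] at h3
    exact zero_ne_one (tendsto_nhds_unique h3 tendsto_const_nhds)
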